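/- Let τ be uniform on [0,1] and let a, b be integers with 1 ≤ b and 0 ≤ a, a + b ≤ n. Then the random variable P := (a + τ·b)/n satisfies, for every ε ∈ [0,1]: Prob(P ≤ ε) = 0 if ε ≤ a/n, Prob(P ≤ ε) = (nε − a)/b if a/n ≤ ε ≤ (a+b)/n, and Prob(P ≤ ε) = 1 if ε ≥ (a+b)/n. Consequently, if additionally the pair (a, b) is random, independent of τ, with a = |{i : αᵢ < αₙ}| and b = |{i : αᵢ = αₙ}| for exchangeable (α₁,…,αₙ), then averaging over (a,b) yields Prob(P ≤ ε) = ε. -/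

import Mathlib

open MeasureTheory Finset ProbabilityTheory
open scoped ENNReal

lemma clamp_eq (A B c : ℝ) (hB : 0 < B) :
    min 1 (max 0 ((c - A)/B)) = (min c (A+B) - min c A)/B := by
  rcases le_total c A with h1 | h1
  · rw [min_eq_left h1, min_eq_left (h1.trans (by linarith))]
    rw [max_eq_left (div_nonpos_of_nonpos_of_nonneg (by linarith) hB.le)]
    simp
  · rw [min_eq_right h1]
    rcases le_total c (A+B) with h2 | h2
    · rw [min_eq_left h2, max_eq_right (div_nonneg (by linarith) hB.le),
        min_eq_right ((div_le_one hB).2 (by linarith))]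
    · rw [min_eq_right h2]
      have h3 : (1:ℝ) ≤ (c - A)/B := (one_le_div hB).2 (by linarith)
      rw [max_eq_right (le_trans zero_le_one h3), min_eq_left h3]
      field_simp
      ring

-- combinatorial key lemma
lemma key_sum (n : ℕ) (x : Fin n → ℝ) (c : ℝ) (h0 : 0 ≤ c) (hn : c ≤ n) :
    ∑ i : Fin n, min 1 (max 0 ((c - ((univ.filter fun j => x j < x i).card : ℝ))
        / ((univ.filter fun j => x j = x i).card : ℝ))) = c := by
  classical
  set s : Finset ℝ := univ.image x with hs
  set m : ℕ := s.card with hm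
  set e : Fin m ≃o s := s.orderIsoOfFin rfl with he
  have hxs : ∀ j, x j ∈ s := fun j => mem_image_of_mem x (mem_univ j)
  set r : Fin n → ℕ := fun j => (e.symm ⟨x j, hxs j⟩ : Fin m) with hr
  have hrlt : ∀ i j, (x j < x i ↔ r j < r i) := by
    intro i j
    simp only [hr]
    show x j < x i ↔ e.symm ⟨x j, hxs j⟩ < e.symm ⟨x i, hxs i⟩
    rw [e.symm.lt_iff_lt, Subtype.mk_lt_mk]
  have hreq : ∀ i j, (x j = x i ↔ r j = r i) := by
    intro i j
    simp only [hr]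
    constructor
    · intro h; exact congrArg (fun y => ((e.symm y : Fin m) : ℕ)) (Subtype.ext h)
    · intro h
      have h2 : e.symm ⟨x j, hxs j⟩ = e.symm ⟨x i, hxs i⟩ := Fin.val_injective h
      simpa using congrArg Subtype.val (e.symm.injective h2)
  -- counting functions
  set N : ℕ → ℕ := fun k => (univ.filter fun j => r j < k).card with hN
  set Eqc : ℕ → ℕ := fun k => (univ.filter fun j => r j = k).card with hEqc
  set F : ℕ → ℝ := fun k => min c (N k) with hF
  -- rewrite counts
  have hLt : ∀ i, (univ.filter fun j => x j < x i).card = N (r i) := by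
    intro i
    simp only [hN]
    congr 1
    exact filter_congr (fun j _ => by rw [hrlt i j])
  have hEq : ∀ i, (univ.filter fun j => x j = x i).card = Eqc (r i) := by
    intro i
    simp only [hEqc]
    congr 1
    exact filter_congr (fun j _ => by rw [hreq i j])
  have hNsucc : ∀ k, N (k+1) = N k + Eqc k := by
    intro k
    simp only [hN, hEqc]
    rw [← card_union_of_disjoint]
    · congr 1
      ext j
      simp only [mem_filter, mem_union, mem_univ, true_and]
      omega
    · rw [disjoint_filter]
      intro j _ h1
      omega
  have hEqc_pos : ∀ i, 0 < Eqc (r i) := by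
    intro i
    rw [← hEq i]
    exact card_pos.2 ⟨i, by simp⟩
  -- per term
  have hterm : ∀ i : Fin n,
      min 1 (max 0 ((c - ((univ.filter fun j => x j < x i).card : ℝ))
        / ((univ.filter fun j => x j = x i).card : ℝ)))
      = (F (r i + 1) - F (r i)) / (Eqc (r i) : ℝ) := by
    intro i
    rw [hLt i, hEq i]
    have hB : (0:ℝ) < (Eqc (r i) : ℝ) := by exact_mod_cast hEqc_pos i
    rw [clamp_eq _ _ _ hB]
    simp only [hF, hNsucc (r i)]
    push_cast
    ring_nf
  rw [Finset.sum_congr rfl (fun i _ => hterm i)]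
  -- group by rank
  have := Finset.sum_comp (s := (univ : Finset (Fin n))) (fun k => (F (k + 1) - F k) / (Eqc k : ℝ)) r
  rw [this]
  have himg : univ.image r = Finset.range m := by
    ext k
    simp only [mem_image, mem_univ, true_and, mem_range]
    constructor
    · rintro ⟨j, rfl⟩; exact (e.symm ⟨x j, hxs j⟩).2
    · intro hk
      have hmem : ((e ⟨k, hk⟩ : s) : ℝ) ∈ univ.image x := (e ⟨k, hk⟩).2
      obtain ⟨j, _, hj⟩ := mem_image.1 hmem
      refine ⟨j, ?_⟩
      simp only [hr]
      have : (⟨x j, hxs j⟩ : s) = e ⟨k, hk⟩ := Subtype.ext hj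
      rw [this, e.symm_apply_apply]
  rw [himg]
  have hfib : ∀ k, (univ.filter fun a => r a = k).card = Eqc k := fun k => rfl
  have hstep : ∀ k ∈ Finset.range m,
      (univ.filter fun a => r a = k).card • ((F (k + 1) - F k) / (Eqc k : ℝ))
        = F (k+1) - F k := by
    intro k hk
    rw [hfib k, nsmul_eq_mul]
    have hkpos : 0 < Eqc k := by
      rw [← himg] at hk
      obtain ⟨j, _, rfl⟩ := mem_image.1 hk
      exact hEqc_pos j
    rw [mul_div_cancel₀]
    exact_mod_cast hkpos.ne'
  rw [Finset.sum_congr rfl hstep, Finset.sum_range_sub]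
  have hN0 : N 0 = 0 := by simp [hN]
  have hNm : N m = n := by
    simp only [hN]
    rw [filter_true_of_mem, card_univ, Fintype.card_fin]
    intro j _
    exact (e.symm ⟨x j, hxs j⟩).2
  simp only [hF, hN0, hNm]
  rw [Nat.cast_zero, min_eq_right h0, min_eq_left hn]
  ring

lemma unif_Iic (t : ℝ) : (volume.restrict (Set.Icc (0:ℝ) 1)) (Set.Iic t)
    = ENNReal.ofReal (min 1 (max 0 t)) := by
  rw [Measure.restrict_apply measurableSet_Iic]
  have h : Set.Iic t ∩ Set.Icc (0:ℝ) 1 = Set.Icc 0 (min t 1) := by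
    ext y
    simp only [Set.mem_inter_iff, Set.mem_Iic, Set.mem_Icc, le_min_iff]
    constructor
    · rintro ⟨h1, h2, h3⟩; exact ⟨h2, h1, h3⟩
    · rintro ⟨h1, h2, h3⟩; exact ⟨h2, h1, h3⟩
  rw [h, Real.volume_Icc]
  rcases le_total t 0 with h1 | h1
  · rw [max_eq_left h1, min_eq_left (h1.trans zero_le_one)]
    rw [ENNReal.ofReal_eq_zero.2 (by linarith)]
    simp
  · rw [max_eq_right h1, min_comm, sub_zero]

lemma meas_cnt (n : ℕ) (p : (Fin n → ℝ) → Fin n → Prop) [∀ x j, Decidable (p x j)]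
    (hp : ∀ j, MeasurableSet {x | p x j}) :
    Measurable fun x : Fin n → ℝ => ((univ.filter (p x)).card : ℝ) := by
  have : (fun x : Fin n → ℝ => ((univ.filter (p x)).card : ℝ))
      = fun x => ∑ j, if p x j then (1:ℝ) else 0 := by
    funext x
    rw [Finset.card_filter]
    push_cast
    rfl
  rw [this]
  exact Finset.measurable_sum _ (fun j _ => Measurable.ite (hp j) measurable_const measurable_const)

/-- Let `τ` be uniform on `[0,1]` and `a, b, n` integers with
`1 ≤ b`, `a + b ≤ n`. Then `P := (a + τ·b)/n` has the stated piecewise CDF;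
consequently, if `(a, b)` are the (random) tie counts of exchangeable
`(α 1, …, α n)` independent of `τ`, averaging yields `Prob(P ≤ ε) = ε`. -/
theorem smoothed_pvalue_cdf_piecewise_and_exact
    {Ω : Type*} [MeasurableSpace Ω] (μ : Measure Ω) [IsProbabilityMeasure μ]
    (τ : Ω → ℝ) (hτmeas : Measurable τ)
    (hτunif : Measure.map τ μ = volume.restrict (Set.Icc (0 : ℝ) 1))
    (n a b : ℕ) (hb : 1 ≤ b) (ha : a + b ≤ n)
    (α : Fin n → Ω → ℝ) (hαmeas : ∀ i, Measurable (α i))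
    (hexch : ∀ π : Equiv.Perm (Fin n),
      Measure.map (fun ω => fun i => α (π i) ω) μ
        = Measure.map (fun ω => fun i => α i ω) μ)
    (hindep : IndepFun τ (fun ω => fun i => α i ω) μ)
    (last : Fin n) (hlast : last = ⟨n - 1, by omega⟩)
    (P Pα : Ω → ℝ)
    (hP : P = fun ω => ((a : ℝ) + τ ω * (b : ℝ)) / (n : ℝ))
    (hPα : Pα = fun ω =>
      (((Finset.univ.filter (fun i : Fin n => α i ω < α last ω)).card : ℝ)
        + τ ω * ((Finset.univ.filter
            (fun i : Fin n => α i ω = α last ω)).card : ℝ)) / (n : ℝ)) :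
    (∀ ε : ℝ, ε ∈ Set.Icc (0 : ℝ) 1 →
        (ε ≤ (a : ℝ) / n → μ {ω | P ω ≤ ε} = 0)
        ∧ ((a : ℝ) / n ≤ ε → ε ≤ ((a : ℝ) + b) / n →
            μ {ω | P ω ≤ ε} = ENNReal.ofReal ((n * ε - a) / b))
        ∧ (((a : ℝ) + b) / n ≤ ε → μ {ω | P ω ≤ ε} = 1))
      ∧ ∀ ε : ℝ, ε ∈ Set.Icc (0 : ℝ) 1 →
          μ {ω | Pα ω ≤ ε} = ENNReal.ofReal ε := by
  classical
  subst hP hPα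
  have hn : 0 < n := by omega
  have hnR : (0:ℝ) < n := by exact_mod_cast hn
  constructor
  · -- Part 1
    intro ε hε
    have hbR : (0:ℝ) < b := by exact_mod_cast hb
    have hset : {ω | ((a : ℝ) + τ ω * b) / n ≤ ε} = τ ⁻¹' Set.Iic ((n*ε - a)/b) := by
      ext ω
      simp only [Set.mem_setOf_eq, Set.mem_preimage, Set.mem_Iic,
        div_le_iff₀ hnR, le_div_iff₀ hbR]
      constructor <;> intro h <;> nlinarith
    have hμ : μ {ω | ((a : ℝ) + τ ω * b) / n ≤ ε}
        = ENNReal.ofReal (min 1 (max 0 ((n*ε - a)/b))) := by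
      rw [hset, ← Measure.map_apply hτmeas measurableSet_Iic, hτunif, unif_Iic]
    refine ⟨?_, ?_, ?_⟩
    · intro h
      have h' : (n:ℝ)*ε - a ≤ 0 := by
        rw [le_div_iff₀ hnR] at h; nlinarith
      rw [hμ, max_eq_left (div_nonpos_of_nonpos_of_nonneg h' hbR.le)]
      simp
    · intro h1 h2
      have ha' : (a:ℝ) ≤ n*ε := by rw [div_le_iff₀ hnR] at h1; nlinarith
      have hab : (n:ℝ)*ε ≤ a + b := by rw [le_div_iff₀ hnR] at h2; nlinarith
      rw [hμ, max_eq_right (div_nonneg (by linarith) hbR.le),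
        min_eq_right ((div_le_one hbR).2 (by linarith))]
    · intro h
      have h' : (1:ℝ) ≤ (n*ε - a)/b := by
        rw [div_le_iff₀ hnR] at h
        exact (one_le_div hbR).2 (by nlinarith)
      rw [hμ, max_eq_right (zero_le_one.trans h'), min_eq_left h']
      simp
  · -- Part 2
    intro ε hε
    obtain ⟨hε0, hε1⟩ := hε
    set V : Ω → (Fin n → ℝ) := fun ω i => α i ω with hV
    have hVmeas : Measurable V := measurable_pi_lambda _ hαmeas
    set A : Fin n → (Fin n → ℝ) → ℝ :=
      fun i x => ((univ.filter fun j => x j < x i).card : ℝ) with hA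
    set B : Fin n → (Fin n → ℝ) → ℝ :=
      fun i x => ((univ.filter fun j => x j = x i).card : ℝ) with hB
    have hAm : ∀ i, Measurable (A i) := fun i =>
      meas_cnt n (fun x j => x j < x i)
        (fun j => measurableSet_lt (measurable_pi_apply j) (measurable_pi_apply i))
    have hBm : ∀ i, Measurable (B i) := fun i =>
      meas_cnt n (fun x j => x j = x i)
        (fun j => measurableSet_eq_fun (measurable_pi_apply j) (measurable_pi_apply i))
    have hBpos : ∀ i x, (0:ℝ) < B i x := by
      intro i x
      have h1 : 0 < (univ.filter fun j => x j = x i).card :=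
        card_pos.2 ⟨i, by simp⟩
      simp only [hB]
      exact_mod_cast h1
    set g : Fin n → (Fin n → ℝ) → ℝ≥0∞ :=
      fun i x => ENNReal.ofReal (min 1 (max 0 ((n*ε - A i x)/(B i x)))) with hg
    have hgm : ∀ i, Measurable (g i) := by
      intro i
      exact ENNReal.measurable_ofReal.comp
        (measurable_const.min (measurable_const.max
          ((measurable_const.sub (hAm i)).div (hBm i))))
    -- Step 1: the event equals the lintegral of g last ∘ V
    have hstep1 : μ {ω | (A last (V ω) + τ ω * B last (V ω)) / n ≤ ε}
        = ∫⁻ ω, g last (V ω) ∂μ := by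
      set f : (Fin n → ℝ) × ℝ → ℝ :=
        fun p => (A last p.1 + p.2 * B last p.1) / n with hf
      have hfm : Measurable f :=
        (((hAm last).comp measurable_fst).add
          (measurable_snd.mul ((hBm last).comp measurable_fst))).div_const _
      have hS : MeasurableSet (f ⁻¹' Set.Iic ε) := hfm measurableSet_Iic
      have hpair : Measurable fun ω => (V ω, τ ω) := hVmeas.prodMk hτmeas
      have hmap : μ.map (fun ω => (V ω, τ ω)) = (μ.map V).prod (μ.map τ) :=
        (indepFun_iff_map_prod_eq_prod_map_map hVmeas.aemeasurable
          hτmeas.aemeasurable).1 hindep.symm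
      have hev : {ω | (A last (V ω) + τ ω * B last (V ω)) / n ≤ ε}
          = (fun ω => (V ω, τ ω)) ⁻¹' (f ⁻¹' Set.Iic ε) := rfl
      rw [hev, ← Measure.map_apply hpair hS, hmap, Measure.prod_apply hS]
      have hinner : ∀ x : Fin n → ℝ,
          (μ.map τ) (Prod.mk x ⁻¹' (f ⁻¹' Set.Iic ε)) = g last x := by
        intro x
        have hBx := hBpos last x
        have hpre : Prod.mk x ⁻¹' (f ⁻¹' Set.Iic ε)
            = Set.Iic ((n*ε - A last x)/(B last x)) := by
          ext t
          simp only [Set.mem_preimage, Set.mem_Iic, hf, div_le_iff₀ hnR,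
            le_div_iff₀ hBx]
          constructor <;> intro h <;> nlinarith
        rw [hpre, hτunif, unif_Iic]
      rw [lintegral_congr hinner, lintegral_map (hgm last) hVmeas]
    -- Step 2: exchangeability
    have hstep2 : ∀ i : Fin n, ∫⁻ ω, g i (V ω) ∂μ = ∫⁻ ω, g last (V ω) ∂μ := by
      intro i
      set π : Equiv.Perm (Fin n) := Equiv.swap last i with hπ
      have hπlast : π last = i := Equiv.swap_apply_left _ _
      have hcomp : ∀ x : Fin n → ℝ, g last (fun j => x (π j)) = g i x := by
        intro x
        have hAx : A last (fun j => x (π j)) = A i x := by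
          simp only [hA, hπlast.symm]
          rw [card_filter, card_filter, ← Equiv.sum_comp π
            (fun j => if x j < x (π last) then 1 else 0)]
        have hBx : B last (fun j => x (π j)) = B i x := by
          simp only [hB, hπlast.symm]
          rw [card_filter, card_filter, ← Equiv.sum_comp π
            (fun j => if x j = x (π last) then 1 else 0)]
        simp only [hg, hAx, hBx]
      have hWm : Measurable fun ω => fun j => α (π j) ω :=
        measurable_pi_lambda _ (fun j => hαmeas (π j))
      calc ∫⁻ ω, g i (V ω) ∂μ
          = ∫⁻ ω, g last (fun j => α (π j) ω) ∂μ := by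
            refine lintegral_congr fun ω => ?_
            rw [← hcomp (V ω)]
        _ = ∫⁻ x, g last x ∂(μ.map (fun ω => fun j => α (π j) ω)) :=
            (lintegral_map (hgm last) hWm).symm
        _ = ∫⁻ x, g last x ∂(μ.map V) := by rw [hexch π]
        _ = ∫⁻ ω, g last (V ω) ∂μ := lintegral_map (hgm last) hVmeas
    -- Step 3: pointwise sum identity
    have hsum : ∀ x : Fin n → ℝ, ∑ i : Fin n, g i x = ENNReal.ofReal (n * ε) := by
      intro x
      rw [← ENNReal.ofReal_sum_of_nonneg
        (fun i _ => le_min zero_le_one (le_max_left 0 _))]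
      congr 1
      exact key_sum n x (n*ε) (by positivity)
        (by nlinarith)
    -- Conclude
    have hmain : (n : ℝ≥0∞) * ∫⁻ ω, g last (V ω) ∂μ = ENNReal.ofReal (n * ε) := by
      calc (n : ℝ≥0∞) * ∫⁻ ω, g last (V ω) ∂μ
          = ∑ _i : Fin n, ∫⁻ ω, g last (V ω) ∂μ := by
            rw [Finset.sum_const, card_univ, Fintype.card_fin, nsmul_eq_mul]
        _ = ∑ i : Fin n, ∫⁻ ω, g i (V ω) ∂μ :=
            (Finset.sum_congr rfl fun i _ => (hstep2 i)).symm
        _ = ∫⁻ ω, ∑ i : Fin n, g i (V ω) ∂μ :=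
            (lintegral_finset_sum _ (fun i _ => (hgm i).comp hVmeas)).symm
        _ = ∫⁻ ω, ENNReal.ofReal (n * ε) ∂μ := lintegral_congr fun ω => hsum (V ω)
        _ = ENNReal.ofReal (n * ε) := by simp
    have hofReal : ENNReal.ofReal (n * ε) = (n : ℝ≥0∞) * ENNReal.ofReal ε := by
      rw [ENNReal.ofReal_mul (by positivity), ENNReal.ofReal_natCast]
    rw [hofReal] at hmain
    have hcancel : ∫⁻ ω, g last (V ω) ∂μ = ENNReal.ofReal ε := by
      have hn0 : (n : ℝ≥0∞) ≠ 0 := by exact_mod_cast hn.ne'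
      exact (ENNReal.mul_right_inj hn0 (ENNReal.natCast_ne_top n)).1 hmain
    rw [← hcancel, ← hstep1]
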